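/- Let f : U → R be locally Lipschitz on an open subset U of a Banach space E, let S ⊆ U be closed and convex, x ∈ S, and suppose f(x) = min_{x̃∈S} f(x̃). Then there exists ξ in the Clarke subdifferential ∂_C f(x) such that ⟨ξ, x̃ − x⟩ ≥ 0 for all x̃ ∈ S. -/

import Mathlib

/- Clarke's multiplier rule: if `f` is locally Lipschitz on an open set `U` of a Banach
space, `S ⊆ U` is closed and convex, `x ∈ S`, and `f(x) = min_S f`, then there is
`ξ ∈ ∂_C f(x)` with `⟨ξ, x̃ − x⟩ ≥ 0` for all `x̃ ∈ S`. -/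

open Filter Topology Pointwise

variable {E : Type*} [NormedAddCommGroup E] [NormedSpace ℝ E]

/-- The Clarke directional derivative. -/
noncomputable def clarkeDeriv (f : E → ℝ) (x v : E) : ℝ :=
  Filter.limsup (fun p : E × ℝ => (f (p.1 + p.2 • v) - f p.1) / p.2)
    ((𝓝 x) ×ˢ (𝓝[>] (0 : ℝ)))

/-- The Clarke subdifferential. -/
def clarkeSubdiff (f : E → ℝ) (x : E) : Set (E →L[ℝ] ℝ) :=
  {ξ | ∀ v : E, ξ v ≤ clarkeDeriv f x v}

/-- The difference quotient appearing in the Clarke directional derivative. -/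
noncomputable def cq (f : E → ℝ) (v : E) : E × ℝ → ℝ :=
  fun p => (f (p.1 + p.2 • v) - f p.1) / p.2

lemma cq_bound (f : E → ℝ) (x : E) {K : NNReal} {ε : ℝ} (hε : 0 < ε)
    (hL : LipschitzOnWith K f (Metric.ball x ε)) (v : E) :
    ∀ᶠ p in (𝓝 x) ×ˢ (𝓝[>] (0 : ℝ)), |cq f v p| ≤ K * ‖v‖ := by
  have hδ : 0 < ε / (2 * (‖v‖ + 1)) := by positivity
  have h1 : ∀ᶠ y in 𝓝 x, y ∈ Metric.ball x (ε / 2) :=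
    Metric.ball_mem_nhds x (by positivity)
  have h2 : Set.Ioc (0:ℝ) (ε / (2 * (‖v‖ + 1))) ∈ 𝓝[>] (0:ℝ) :=
    Ioc_mem_nhdsGT hδ
  filter_upwards [Filter.Eventually.prod_mk h1 (eventually_mem_set.2 h2)] with p hp
  obtain ⟨hp1, hp2⟩ := hp
  have hτ : 0 < p.2 := hp2.1
  have hmem1 : p.1 ∈ Metric.ball x ε := by
    have := Metric.mem_ball.1 hp1
    refine Metric.mem_ball.2 (lt_of_lt_of_le this (by linarith))
  have hsm : ‖p.2 • v‖ ≤ ε / 2 := by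
    rw [norm_smul, Real.norm_eq_abs, abs_of_pos hτ]
    calc p.2 * ‖v‖ ≤ (ε / (2 * (‖v‖ + 1))) * (‖v‖ + 1) := by
          apply mul_le_mul hp2.2 (by linarith) (norm_nonneg v) hδ.le
      _ = ε / 2 := by field_simp
  have hmem2 : p.1 + p.2 • v ∈ Metric.ball x ε := by
    rw [Metric.mem_ball, dist_eq_norm] at hp1 ⊢
    calc ‖p.1 + p.2 • v - x‖ = ‖p.1 - x + p.2 • v‖ := by rw [add_sub_right_comm]
      _ ≤ ‖p.1 - x‖ + ‖p.2 • v‖ := norm_add_le _ _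
      _ < ε / 2 + ε / 2 := by
          exact add_lt_add_of_lt_of_le hp1 hsm
      _ = ε := by ring
  have hd := hL.dist_le_mul _ hmem2 _ hmem1
  rw [Real.dist_eq] at hd
  have : dist (p.1 + p.2 • v) p.1 = p.2 * ‖v‖ := by
    rw [dist_eq_norm]
    simp [norm_smul, abs_of_pos hτ]
  rw [this] at hd
  have : |cq f v p| = |f (p.1 + p.2 • v) - f p.1| / p.2 := by
    rw [cq, abs_div, abs_of_pos hτ]
  rw [this]
  rw [div_le_iff₀ hτ]
  calc |f (p.1 + p.2 • v) - f p.1| ≤ (K : ℝ) * (p.2 * ‖v‖) := hd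
    _ = (K : ℝ) * ‖v‖ * p.2 := by ring

/-- The Clarke directional derivative as a limsup of `cq`. -/
lemma clarkeDeriv_eq (f : E → ℝ) (x v : E) :
    clarkeDeriv f x v = limsup (cq f v) ((𝓝 x) ×ˢ (𝓝[>] (0 : ℝ))) := rfl

section Bounds

variable (f : E → ℝ) (x : E) {K : NNReal} {ε : ℝ}

lemma clarkeDeriv_le (hε : 0 < ε) (hL : LipschitzOnWith K f (Metric.ball x ε)) (v : E) :
    clarkeDeriv f x v ≤ K * ‖v‖ := by
  rw [clarkeDeriv_eq]
  refine limsup_le_of_le ?_ ((cq_bound f x hε hL v).mono fun p h => (abs_le.1 h).2)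
  exact isCoboundedUnder_le_of_eventually_le _
    ((cq_bound f x hε hL v).mono fun p h => (abs_le.1 h).1)

lemma neg_le_clarkeDeriv (hε : 0 < ε) (hL : LipschitzOnWith K f (Metric.ball x ε)) (v : E) :
    -(K * ‖v‖) ≤ clarkeDeriv f x v := by
  rw [clarkeDeriv_eq]
  refine le_limsup_of_frequently_le
    (((cq_bound f x hε hL v).mono fun p h => (abs_le.1 h).1).frequently) ?_
  exact isBoundedUnder_of_eventually_le ((cq_bound f x hε hL v).mono fun p h => (abs_le.1 h).2)

lemma clarkeDeriv_zero : clarkeDeriv f x 0 = 0 := by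
  rw [clarkeDeriv_eq]
  have : cq f (0 : E) = fun _ => (0 : ℝ) := by
    funext p; simp [cq]
  rw [this, limsup_const]

lemma clarkeDeriv_add_le (hε : 0 < ε) (hL : LipschitzOnWith K f (Metric.ball x ε)) (u v : E) :
    clarkeDeriv f x (u + v) ≤ clarkeDeriv f x u + clarkeDeriv f x v := by
  set F := (𝓝 x) ×ˢ (𝓝[>] (0 : ℝ)) with hF
  set m : E × ℝ → E × ℝ := fun p => (p.1 + p.2 • v, p.2) with hm
  have htm : Tendsto m F F := by
    refine Tendsto.prodMk ?_ tendsto_snd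
    have h2 : Tendsto (fun p : E × ℝ => p.2 • v) F (𝓝 ((0:ℝ) • v)) :=
      (tendsto_snd.mono_right nhdsWithin_le_nhds).smul_const v
    simpa using tendsto_fst.add h2
  have hqe : cq f (u + v) = (fun p => cq f u (m p)) + cq f v := by
    funext p
    show (f (p.1 + p.2 • (u + v)) - f p.1) / p.2
      = (f ((p.1 + p.2 • v) + p.2 • u) - f (p.1 + p.2 • v)) / p.2
        + (f (p.1 + p.2 • v) - f p.1) / p.2
    rw [← add_div, sub_add_sub_cancel]
    congr 2
    rw [smul_add]; abel
  have bu := cq_bound f x hε hL u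
  have bv := cq_bound f x hε hL v
  have bum : ∀ᶠ p in F, |cq f u (m p)| ≤ K * ‖u‖ := htm.eventually bu
  have h1 : IsBoundedUnder (· ≥ ·) F (fun p => cq f u (m p)) :=
    isBoundedUnder_of_eventually_ge (bum.mono fun p h => (abs_le.1 h).1)
  have h2 : IsBoundedUnder (· ≤ ·) F (fun p => cq f u (m p)) :=
    isBoundedUnder_of_eventually_le (bum.mono fun p h => (abs_le.1 h).2)
  have h3 : IsCoboundedUnder (· ≤ ·) F (cq f v) :=
    isCoboundedUnder_le_of_eventually_le _ (bv.mono fun p h => (abs_le.1 h).1)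
  have h4 : IsBoundedUnder (· ≤ ·) F (cq f v) :=
    isBoundedUnder_of_eventually_le (bv.mono fun p h => (abs_le.1 h).2)
  have hmain : limsup (cq f (u + v)) F
      ≤ limsup (fun p => cq f u (m p)) F + limsup (cq f v) F := by
    rw [hqe]; exact limsup_add_le h1 h2 h3 h4
  have hcomp : limsup (fun p => cq f u (m p)) F ≤ limsup (cq f u) F := by
    have he : limsup (fun p => cq f u (m p)) F = limsup (cq f u) (map m F) :=
      limsup_comp (cq f u) m F
    rw [he]
    refine limsup_le_limsup_of_le htm ?_ ?_
    · exact isCoboundedUnder_le_of_eventually_le _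
        (eventually_map.2 (bum.mono fun p h => (abs_le.1 h).1))
    · exact isBoundedUnder_of_eventually_le (bu.mono fun p h => (abs_le.1 h).2)
  calc clarkeDeriv f x (u + v) = limsup (cq f (u + v)) F := rfl
    _ ≤ limsup (fun p => cq f u (m p)) F + limsup (cq f v) F := hmain
    _ ≤ limsup (cq f u) F + limsup (cq f v) F := add_le_add_left hcomp _
    _ = clarkeDeriv f x u + clarkeDeriv f x v := rfl

end Bounds

section Smul

variable (f : E → ℝ) (x : E) {K : NNReal} {ε : ℝ}

lemma tendsto_scale {c : ℝ} (hc : 0 < c) :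
    Tendsto (fun p : E × ℝ => (p.1, c * p.2)) ((𝓝 x) ×ˢ (𝓝[>] (0 : ℝ)))
      ((𝓝 x) ×ˢ (𝓝[>] (0 : ℝ))) := by
  refine Tendsto.prodMk tendsto_fst ?_
  rw [tendsto_nhdsWithin_iff]
  constructor
  · have h : Tendsto (fun p : E × ℝ => p.2) ((𝓝 x) ×ˢ (𝓝[>] (0 : ℝ))) (𝓝 0) :=
      tendsto_snd.mono_right nhdsWithin_le_nhds
    simpa using h.const_mul c
  · have h : ∀ᶠ p : E × ℝ in (𝓝 x) ×ˢ (𝓝[>] (0 : ℝ)), p.2 ∈ Set.Ioi (0:ℝ) :=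
      tendsto_snd.eventually eventually_mem_nhdsWithin
    exact h.mono fun p hp => mul_pos hc hp

lemma map_scale_eq {c : ℝ} (hc : 0 < c) :
    map (fun p : E × ℝ => (p.1, c * p.2)) ((𝓝 x) ×ˢ (𝓝[>] (0 : ℝ)))
      = (𝓝 x) ×ˢ (𝓝[>] (0 : ℝ)) := by
  refine le_antisymm (tendsto_scale x hc) ?_
  have h2 := tendsto_scale x (inv_pos.2 hc) (E := E)
  calc (𝓝 x) ×ˢ (𝓝[>] (0 : ℝ))
      = map (fun p : E × ℝ => (p.1, c * p.2))
          (map (fun p : E × ℝ => (p.1, c⁻¹ * p.2)) ((𝓝 x) ×ˢ (𝓝[>] (0 : ℝ)))) := by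
        rw [map_map]
        have : ((fun p : E × ℝ => (p.1, c * p.2)) ∘ fun p : E × ℝ => (p.1, c⁻¹ * p.2)) = id := by
          funext p
          simp [Function.comp, ← mul_assoc, mul_inv_cancel₀ hc.ne']
        rw [this, map_id]
    _ ≤ map (fun p : E × ℝ => (p.1, c * p.2)) ((𝓝 x) ×ˢ (𝓝[>] (0 : ℝ))) := map_mono h2

lemma clarkeDeriv_smul (hε : 0 < ε) (hL : LipschitzOnWith K f (Metric.ball x ε))
    {c : ℝ} (hc : 0 < c) (v : E) :
    clarkeDeriv f x (c • v) = c * clarkeDeriv f x v := by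
  set F := (𝓝 x) ×ˢ (𝓝[>] (0 : ℝ)) with hF
  set m : E × ℝ → E × ℝ := fun p => (p.1, c * p.2) with hm
  have htm : Tendsto m F F := tendsto_scale x hc
  have hfun : cq f (c • v) = fun p : E × ℝ => c * cq f v (m p) := by
    funext p
    show (f (p.1 + p.2 • (c • v)) - f p.1) / p.2
      = c * ((f (p.1 + (c * p.2) • v) - f p.1) / (c * p.2))
    rw [smul_smul, mul_comm p.2 c, ← mul_div_assoc, mul_div_mul_left _ _ hc.ne']
  have bv := cq_bound f x hε hL v
  have bvm : ∀ᶠ p in F, |cq f v (m p)| ≤ K * ‖v‖ := htm.eventually bv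
  have h1 : IsBoundedUnder (· ≤ ·) F (fun p => cq f v (m p)) :=
    isBoundedUnder_of_eventually_le (bvm.mono fun p h => (abs_le.1 h).2)
  have h2 : IsCoboundedUnder (· ≤ ·) F (fun p => cq f v (m p)) :=
    isCoboundedUnder_le_of_eventually_le _ (bvm.mono fun p h => (abs_le.1 h).1)
  have h3 : IsBoundedUnder (· ≤ ·) F (fun p => c * cq f v (m p)) :=
    isBoundedUnder_of_eventually_le (bvm.mono fun p h =>
      (mul_le_mul_of_nonneg_left ((abs_le.1 h).2) hc.le))
  have h4 : IsCoboundedUnder (· ≤ ·) F (fun p => c * cq f v (m p)) :=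
    isCoboundedUnder_le_of_eventually_le _ (bvm.mono fun p h =>
      (mul_le_mul_of_nonneg_left ((abs_le.1 h).1) hc.le))
  have hiso : c * limsup (fun p => cq f v (m p)) F = limsup (fun p => c * cq f v (m p)) F :=
    (OrderIso.mulLeft₀ c hc).limsup_apply h1 h2 h3 h4
  calc clarkeDeriv f x (c • v) = limsup (cq f (c • v)) F := rfl
    _ = limsup (fun p => c * cq f v (m p)) F := by rw [hfun]
    _ = c * limsup (fun p => cq f v (m p)) F := hiso.symm
    _ = c * limsup (cq f v) (map m F) := by rw [← limsup_comp (cq f v) m F]; rfl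
    _ = c * limsup (cq f v) F := by rw [map_scale_eq x hc]
    _ = c * clarkeDeriv f x v := rfl

end Smul

lemma clarkeDeriv_sub_nonneg (f : E → ℝ) {x : E} {K : NNReal} {ε : ℝ}
    (hε : 0 < ε) (hL : LipschitzOnWith K f (Metric.ball x ε))
    {S : Set E} (hScv : Convex ℝ S) (hx : x ∈ S) (hmin : ∀ y ∈ S, f x ≤ f y)
    {y : E} (hy : y ∈ S) : 0 ≤ clarkeDeriv f x (y - x) := by
  set F := (𝓝 x) ×ˢ (𝓝[>] (0 : ℝ)) with hF
  set G := (pure x : Filter E) ×ˢ (𝓝[>] (0 : ℝ)) with hG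
  have hGF : G ≤ F := prod_mono (pure_le_nhds x) le_rfl
  have bv := cq_bound f x hε hL (y - x)
  have bvG : ∀ᶠ p in G, |cq f (y - x) p| ≤ K * ‖y - x‖ := bv.filter_mono hGF
  have evpos : ∀ᶠ p in G, 0 ≤ cq f (y - x) p := by
    have h1 : ∀ᶠ a in (pure x : Filter E), a = x := eventually_pure.2 rfl
    have h2 : ∀ᶠ τ in 𝓝[>] (0:ℝ), τ ∈ Set.Ioc (0:ℝ) 1 :=
      eventually_mem_set.2 (Ioc_mem_nhdsGT one_pos)
    filter_upwards [Filter.Eventually.prod_mk h1 h2] with p hp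
    obtain ⟨hp1, hp2⟩ := hp
    have hmem : p.1 + p.2 • (y - x) ∈ S := by
      have hc := hScv hx hy (by linarith [hp2.2] : (0:ℝ) ≤ 1 - p.2) hp2.1.le (by ring)
      have he : p.1 + p.2 • (y - x) = (1 - p.2) • x + p.2 • y := by
        rw [hp1, smul_sub, sub_smul, one_smul]; abel
      rw [he]; exact hc
    have hfe : f x ≤ f (p.1 + p.2 • (y - x)) := hmin _ hmem
    have : 0 ≤ f (p.1 + p.2 • (y - x)) - f p.1 := by rw [hp1] at hfe ⊢; linarith
    exact div_nonneg this hp2.1.le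
  have h0G : 0 ≤ limsup (cq f (y - x)) G :=
    le_limsup_of_frequently_le evpos.frequently
      (isBoundedUnder_of_eventually_le (bvG.mono fun p h => (abs_le.1 h).2))
  have hmono : limsup (cq f (y - x)) G ≤ limsup (cq f (y - x)) F := by
    refine limsup_le_limsup_of_le hGF ?_ ?_
    · exact isCoboundedUnder_le_of_eventually_le _ (bvG.mono fun p h => (abs_le.1 h).1)
    · exact isBoundedUnder_of_eventually_le (bv.mono fun p h => (abs_le.1 h).2)
  exact h0G.trans hmono

theorem clarke_multiplier_rule [CompleteSpace E] (U : Set E) (hU : IsOpen U) (f : E → ℝ)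
    (hf : ∀ y ∈ U, ∃ (K : NNReal) (V : Set E), V ∈ 𝓝 y ∧ LipschitzOnWith K f V)
    (S : Set E) (hSU : S ⊆ U) (hScl : IsClosed S) (hScv : Convex ℝ S)
    (x : E) (hx : x ∈ S) (hmin : ∀ y ∈ S, f x ≤ f y) :
    ∃ ξ ∈ clarkeSubdiff f x, ∀ y ∈ S, 0 ≤ ξ (y - x) := by
  obtain ⟨K, V, hV, hLV⟩ := hf x (hSU hx)
  obtain ⟨ε, hε, hball⟩ := Metric.mem_nhds_iff.1 hV
  have hL : LipschitzOnWith K f (Metric.ball x ε) := hLV.mono hball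
  set p : E → ℝ := clarkeDeriv f x with hpdef
  have hple : ∀ v, p v ≤ K * ‖v‖ := clarkeDeriv_le f x hε hL
  have hpadd : ∀ u v, p (u + v) ≤ p u + p v := clarkeDeriv_add_le f x hε hL
  have hpsmul : ∀ c : ℝ, 0 < c → ∀ v, p (c • v) = c * p v :=
    fun c hc v => clarkeDeriv_smul f x hε hL hc v
  have hp0 : p 0 = 0 := clarkeDeriv_zero f x
  have hpS : ∀ y ∈ S, 0 ≤ p (y - x) :=
    fun y hy => clarkeDeriv_sub_nonneg f hε hL hScv hx hmin hy
  -- the cone generated by `S - x`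
  set Kc : Set E := {w | ∃ y ∈ S, ∃ t : ℝ, 0 ≤ t ∧ w = t • (y - x)} with hKc
  have h0K : (0 : E) ∈ Kc := ⟨x, hx, 0, le_rfl, by simp⟩
  have hKsmul : ∀ (c : ℝ), 0 ≤ c → ∀ w ∈ Kc, c • w ∈ Kc := by
    rintro c hc w ⟨y, hy, t, ht, rfl⟩
    exact ⟨y, hy, c * t, mul_nonneg hc ht, smul_smul c t _⟩
  have hKadd : ∀ w₁ ∈ Kc, ∀ w₂ ∈ Kc, w₁ + w₂ ∈ Kc := by
    rintro w₁ ⟨y₁, hy₁, t₁, ht₁, rfl⟩ w₂ ⟨y₂, hy₂, t₂, ht₂, rfl⟩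
    rcases eq_or_lt_of_le (add_nonneg ht₁ ht₂) with h | h
    · have h1 : t₁ = 0 := by linarith
      have h2 : t₂ = 0 := by linarith
      simpa [h1, h2] using h0K
    · set t := t₁ + t₂ with htdef
      set y₃ := (t₁ / t) • y₁ + (t₂ / t) • y₂ with hy₃
      have hy₃S : y₃ ∈ S := hScv hy₁ hy₂ (div_nonneg ht₁ h.le) (div_nonneg ht₂ h.le)
        (by field_simp; exact htdef.symm)
      refine ⟨y₃, hy₃S, t, h.le, ?_⟩
      have e1 : t • y₃ = t₁ • y₁ + t₂ • y₂ := by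
        rw [hy₃, smul_add, smul_smul, smul_smul, mul_div_cancel₀ _ h.ne', mul_div_cancel₀ _ h.ne']
      have e2 : t • (y₃ - x) = t₁ • (y₁ - x) + t₂ • (y₂ - x) := by
        rw [smul_sub, e1, htdef, add_smul, smul_sub, smul_sub]; abel
      exact e2.symm
  have hKpos : ∀ w ∈ Kc, 0 ≤ p w := by
    rintro w ⟨y, hy, t, ht, rfl⟩
    rcases eq_or_lt_of_le ht with h | h
    · simp [← h, hp0]
    · rw [hpsmul t h]
      exact mul_nonneg h.le (hpS y hy)
  -- the inf-convolution
  set N : E → ℝ := fun v => sInf ((fun w => p (v + w)) '' Kc) with hNdef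
  have hne : ∀ v : E, ((fun w => p (v + w)) '' Kc).Nonempty :=
    fun v => ⟨_, ⟨0, h0K, rfl⟩⟩
  have hlb : ∀ v : E, ∀ a ∈ (fun w => p (v + w)) '' Kc, -(p (-v)) ≤ a := by
    rintro v a ⟨w, hw, rfl⟩
    have h1 : p w ≤ p (v + w) + p (-v) := by
      have h2 := hpadd (v + w) (-v)
      have e : v + w + -v = w := by abel
      rw [e] at h2; exact h2
    linarith [hKpos w hw]
  have hbdd : ∀ v : E, BddBelow ((fun w => p (v + w)) '' Kc) :=
    fun v => ⟨-(p (-v)), fun a ha => hlb v a ha⟩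
  have hNle : ∀ v : E, ∀ w ∈ Kc, N v ≤ p (v + w) :=
    fun v w hw => csInf_le (hbdd v) ⟨w, hw, rfl⟩
  have hNp : ∀ v, N v ≤ p v := fun v => by simpa using hNle v 0 h0K
  have hNadd : ∀ u v, N (u + v) ≤ N u + N v := by
    intro u v
    have key : ∀ a ∈ (fun w => p (u + w)) '' Kc, ∀ b ∈ (fun w => p (v + w)) '' Kc,
        N (u + v) ≤ a + b := by
      rintro a ⟨w₁, hw₁, rfl⟩ b ⟨w₂, hw₂, rfl⟩
      calc N (u + v) ≤ p (u + v + (w₁ + w₂)) := hNle _ _ (hKadd _ hw₁ _ hw₂)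
        _ ≤ p (u + w₁) + p (v + w₂) := by
            have e : u + v + (w₁ + w₂) = (u + w₁) + (v + w₂) := by abel
            rw [e]; exact hpadd _ _
    have step : ∀ a ∈ (fun w => p (u + w)) '' Kc, N (u + v) - a ≤ N v :=
      fun a ha => le_csInf (hne v) fun b hb => by linarith [key a ha b hb]
    have final : N (u + v) - N v ≤ N u :=
      le_csInf (hne u) fun a ha => by linarith [step a ha]
    linarith
  have hNsmul : ∀ c : ℝ, 0 < c → ∀ v : E, N (c • v) = c * N v := by
    intro c hc v
    have himg : (fun w => p (c • v + w)) '' Kc = c • ((fun w => p (v + w)) '' Kc) := by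
      ext a
      constructor
      · rintro ⟨w, hw, rfl⟩
        refine ⟨p (v + c⁻¹ • w), ⟨c⁻¹ • w, hKsmul c⁻¹ (inv_nonneg.2 hc.le) w hw, rfl⟩, ?_⟩
        show c • p (v + c⁻¹ • w) = p (c • v + w)
        rw [smul_eq_mul, ← hpsmul c hc, smul_add, smul_smul, mul_inv_cancel₀ hc.ne', one_smul]
      · rintro ⟨a, ⟨w, hw, rfl⟩, rfl⟩
        refine ⟨c • w, hKsmul c hc.le w hw, ?_⟩
        show p (c • v + c • w) = c • p (v + w)
        rw [smul_eq_mul, ← hpsmul c hc, smul_add]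
    show sInf ((fun w => p (c • v + w)) '' Kc) = c * sInf ((fun w => p (v + w)) '' Kc)
    rw [himg, Real.sInf_smul_of_nonneg hc.le, smul_eq_mul]
  -- Hahn-Banach
  have hN0 : (0:ℝ) ≤ N 0 := by
    refine le_csInf (hne 0) ?_
    rintro b ⟨w, hw, rfl⟩
    simpa using hKpos w hw
  have hf0 : ∀ xx : (⟨⊥, 0⟩ : E →ₗ.[ℝ] ℝ).domain, (⟨⊥, 0⟩ : E →ₗ.[ℝ] ℝ) xx ≤ N xx := by
    rintro ⟨v, hv⟩
    have hv0 : v = 0 := (Submodule.mem_bot ℝ).1 hv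
    simp only [hv0]
    show (0 : ↥(⊥ : Submodule ℝ E) →ₗ[ℝ] ℝ) _ ≤ N 0
    rw [LinearMap.zero_apply]
    exact hN0
  obtain ⟨g, -, hg⟩ := exists_extension_of_le_sublinear ⟨⊥, 0⟩ N hNsmul hNadd hf0
  · have hgb : ∀ v, ‖g v‖ ≤ (K : ℝ) * ‖v‖ := by
      intro v
      rw [Real.norm_eq_abs, abs_le]
      constructor
      · have h1 : g (-v) ≤ N (-v) := hg (-v)
        have h2 := (hNp (-v)).trans (hple (-v))
        rw [map_neg, norm_neg] at *
        linarith
      · exact (hg v).trans ((hNp v).trans (hple v))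
    refine ⟨LinearMap.mkContinuous g (K : ℝ) hgb, ?_, ?_⟩
    · intro v
      show g v ≤ clarkeDeriv f x v
      exact (hg v).trans (hNp v)
    · intro y hy
      have hw : y - x ∈ Kc := ⟨y, hy, 1, zero_le_one, (one_smul _ _).symm⟩
      have h1 : g (-(y - x)) ≤ N (-(y - x)) := hg _
      have h2 : N (-(y - x)) ≤ p (-(y - x) + (y - x)) := hNle _ _ hw
      rw [neg_add_cancel, hp0] at h2
      rw [map_neg] at h1
      show (0:ℝ) ≤ g (y - x)
      linarith
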